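/- Let n ≥ 1 and let p, a_1, a_2, t be nonzero complex numbers with |p| < 1, generic so that all theta denominators appearing in the fundamental invariants are nonzero. Then for all 0 ≤ r, s ≤ n, the fundamental invariant satisfies the interpolation property E_r(a_1, a_2; ζ^{(s)}) = δ_{rs}, where δ_{rs} is the Kronecker delta. -/

import Mathlib

open Finset

/-- The theta function `θ(z;p) = ∏_{i≥0} (1 - p^i z)(1 - p^{i+1}/z)`. -/
noncomputable def theta (p z : ℂ) : ℂ :=
  ∏' i : ℕ, ((1 - p ^ i * z) * (1 - p ^ (i + 1) * z⁻¹))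

/-- The theta shifted factorial `θ(z;p;q)_k = ∏_{j=0}^{k-1} θ(q^j z;p)`. -/
noncomputable def thetaPoch (p q z : ℂ) (k : ℕ) : ℂ :=
  ∏ j ∈ Finset.range k, theta p (q ^ j * z)

/-- `θ(x u^{±1};p) = θ(xu;p) θ(x/u;p)`. -/
noncomputable def thetaPm (p x u : ℂ) : ℂ :=
  theta p (x * u) * theta p (x * u⁻¹)

/-- The fundamental `BC_n` invariant `E_r(a₁,a₂;z)`, as a sum over the subsets
`S = {i_1 < … < i_r}` of `{0,…,n-1}` (0-based indexing); for `i ∈ S`,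
`(S.filter (· < i)).card` is the (0-based) rank of `i` in `S`. -/
noncomputable def Efun (p t a₁ a₂ : ℂ) {n : ℕ} (r : ℕ) (z : Fin n → ℂ) : ℂ :=
  ∑ S ∈ Finset.powersetCard r (Finset.univ : Finset (Fin n)),
    (∏ i ∈ S,
        thetaPm p (a₂ * t ^ ((i : ℕ) - (S.filter (fun j => j < i)).card)) (z i) /
          thetaPm p (a₂ * t ^ ((i : ℕ) - (S.filter (fun j => j < i)).card))
            (a₁ * t ^ (S.filter (fun j => j < i)).card)) *
    (∏ i ∈ Sᶜ,
        thetaPm p (a₁ * t ^ ((i : ℕ) - (Sᶜ.filter (fun j => j < i)).card)) (z i) /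
          thetaPm p (a₁ * t ^ ((i : ℕ) - (Sᶜ.filter (fun j => j < i)).card))
            (a₂ * t ^ (Sᶜ.filter (fun j => j < i)).card))

/-- Genericity: all theta denominators appearing in the fundamental invariants are nonzero. -/
def eDenomsNZ (p t a₁ a₂ : ℂ) (n : ℕ) : Prop :=
  ∀ k l : ℕ, k < n → l < n →
    thetaPm p (a₂ * t ^ k) (a₁ * t ^ l) ≠ 0 ∧ thetaPm p (a₁ * t ^ k) (a₂ * t ^ l) ≠ 0

/-- The reference point `ζ^{(s)} = (a₁, a₁t, …, a₁ t^{s-1}, a₂, a₂ t, …, a₂ t^{n-s-1})`. -/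
noncomputable def zetaPt (a₁ a₂ t : ℂ) (n s : ℕ) : Fin n → ℂ :=
  fun i => if (i : ℕ) < s then a₁ * t ^ (i : ℕ) else a₂ * t ^ ((i : ℕ) - s)

/-- `F_i^+(z)`. -/
noncomputable def Fplus (p t : ℂ) (a : Fin 6 → ℂ) {n : ℕ} (i : Fin n) (z : Fin n → ℂ) : ℂ :=
  ((∏ m : Fin 6, theta p (a m * z i)) / ((z i) ^ 2 * theta p ((z i) ^ 2))) *
    ∏ j ∈ Finset.univ.erase i, thetaPm p (t * z i) (z j) / thetaPm p (z i) (z j)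

/-- `F_i^-(z) = F_i^+(z_1, …, z_i⁻¹, …, z_n)`. -/
noncomputable def Fminus (p t : ℂ) (a : Fin 6 → ℂ) {n : ℕ} (i : Fin n) (z : Fin n → ℂ) : ℂ :=
  Fplus p t a i (Function.update z i (z i)⁻¹)

/-- None of the theta denominators of `F_i^+` vanishes at `z`. -/
def FplusDenomNZ (p : ℂ) {n : ℕ} (i : Fin n) (z : Fin n → ℂ) : Prop :=
  theta p ((z i) ^ 2) ≠ 0 ∧ ∀ j, j ≠ i → thetaPm p (z i) (z j) ≠ 0

/-- None of the theta denominators of `F_i^-` vanishes at `z`. -/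
def FminusDenomNZ (p : ℂ) {n : ℕ} (i : Fin n) (z : Fin n → ℂ) : Prop :=
  FplusDenomNZ p i (Function.update z i (z i)⁻¹)

/-- `h_r(z) = Σ_i (F_i^-(z) + F_i^+(z)) E_{r-1}^{(n-1)}(z_1,…,ẑ_i,…,z_n)`, in `n+1` variables. -/
noncomputable def hFun (p t : ℂ) (a : Fin 6 → ℂ) (n r : ℕ) (z : Fin (n + 1) → ℂ) : ℂ :=
  ∑ i : Fin (n + 1),
    (Fminus p t a i z + Fplus p t a i z) *
      Efun p t (a 0) (a 1) (r - 1) (fun j : Fin n => z (i.succAbove j))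

/-- The base point `ξ = (a₁, a₁ t, …, a₁ t^{n-1})`. -/
noncomputable def xiPt (a₁ t : ℂ) (n : ℕ) : Fin n → ℂ := fun i => a₁ * t ^ (i : ℕ)

/-- The weight `W(ν) = Φ(q^ν ξ)/Φ(ξ)` of the truncated Jackson integral. -/
noncomputable def weight (p q t : ℂ) (a : Fin 6 → ℂ) (n : ℕ) (ν : Fin n → ℕ) : ℂ :=
  (∏ i : Fin n,
      (q ^ 2 * (a 0 * a 1 * a 2 * a 3 * a 4 * a 5 * t ^ (2 * n - 2))⁻¹ *
            t ^ (2 * (n - 1 - (i : ℕ)))) ^ ν i *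
        theta p (q ^ (2 * ν i) * xiPt (a 0) t n i ^ 2) / theta p (xiPt (a 0) t n i ^ 2)) *
  (∏ j : Fin n, ∏ k ∈ Finset.Ioi j,
      theta p (q ^ (ν k - ν j) * (xiPt (a 0) t n k / xiPt (a 0) t n j)) *
          theta p (q ^ (ν j + ν k) * (xiPt (a 0) t n j * xiPt (a 0) t n k)) /
        (theta p (xiPt (a 0) t n k / xiPt (a 0) t n j) *
          theta p (xiPt (a 0) t n j * xiPt (a 0) t n k))) *
  (∏ i : Fin n, ∏ m : Fin 6,
      thetaPoch p q (a m * xiPt (a 0) t n i) (ν i) /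
        thetaPoch p q (q * (a m)⁻¹ * xiPt (a 0) t n i) (ν i)) *
  (∏ j : Fin n, ∏ k ∈ Finset.Ioi j,
      thetaPoch p q (t * (xiPt (a 0) t n k / xiPt (a 0) t n j)) (ν k - ν j) *
          thetaPoch p q (t * (xiPt (a 0) t n j * xiPt (a 0) t n k)) (ν j + ν k) /
        (thetaPoch p q (q * t⁻¹ * (xiPt (a 0) t n k / xiPt (a 0) t n j)) (ν k - ν j) *
          thetaPoch p q (q * t⁻¹ * (xiPt (a 0) t n j * xiPt (a 0) t n k)) (ν j + ν k)))

/-- The truncated Jackson integral `⟨φ⟩ = Σ_{0 ≤ ν₁ ≤ … ≤ ν_n ≤ N} W(ν) φ(q^ν ξ)`. -/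
noncomputable def jackson (p q t : ℂ) (a : Fin 6 → ℂ) (n N : ℕ)
    (φ : (Fin n → ℂ) → ℂ) : ℂ :=
  ∑ ν ∈ Finset.univ.filter
      (fun ν : Fin n → Fin (N + 1) => ∀ i j : Fin n, i ≤ j → ν i ≤ ν j),
    weight p q t a n (fun i => (ν i : ℕ)) *
      φ (fun i => q ^ (ν i : ℕ) * xiPt (a 0) t n i)

/-- Genericity: all theta denominators appearing in the weight `W(ν)`,
for `0 ≤ ν₁ ≤ … ≤ ν_n ≤ N`, are nonzero. -/
def weightDenomsNZ (p q t : ℂ) (a : Fin 6 → ℂ) (n N : ℕ) : Prop :=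
  (∀ i : Fin n, theta p (xiPt (a 0) t n i ^ 2) ≠ 0) ∧
  (∀ j k : Fin n, j < k →
      theta p (xiPt (a 0) t n k / xiPt (a 0) t n j) ≠ 0 ∧
        theta p (xiPt (a 0) t n j * xiPt (a 0) t n k) ≠ 0) ∧
  (∀ (m : Fin 6) (i : Fin n) (k : ℕ), k ≤ N →
      thetaPoch p q (q * (a m)⁻¹ * xiPt (a 0) t n i) k ≠ 0) ∧
  (∀ j k : Fin n, j < k → ∀ l : ℕ, l ≤ 2 * N →
      thetaPoch p q (q * t⁻¹ * (xiPt (a 0) t n k / xiPt (a 0) t n j)) l ≠ 0 ∧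
        thetaPoch p q (q * t⁻¹ * (xiPt (a 0) t n j * xiPt (a 0) t n k)) l ≠ 0)
section EfunInterpAux

private lemma myTprodZero (f : ℕ → ℂ) (i0 : ℕ) (h : f i0 = 0) : ∏' i, f i = 0 := by
  have hp : HasProd f 0 := by
    have he : ∀ᶠ s : Finset ℕ in Filter.atTop, ∏ i ∈ s, f i = 0 := by
      filter_upwards [Filter.eventually_ge_atTop ({i0} : Finset ℕ)] with s hs
      exact Finset.prod_eq_zero (hs (Finset.mem_singleton_self i0)) h
    exact Filter.Tendsto.congr' (by filter_upwards [he] with s hs; exact hs.symm)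
      tendsto_const_nhds
  exact hp.tprod_eq

private lemma myThetaOne (p : ℂ) : theta p 1 = 0 := by
  apply myTprodZero _ 0
  simp

private lemma myThetaPmSelf (p x : ℂ) (hx : x ≠ 0) : thetaPm p x x = 0 := by
  unfold thetaPm
  rw [mul_inv_cancel₀ hx, myThetaOne, mul_zero]

private lemma myCardValLt (n s : ℕ) (hs : s ≤ n) :
    ((Finset.univ : Finset (Fin n)).filter (fun j : Fin n => (j : ℕ) < s)).card = s := by
  rw [← Finset.card_range s]
  apply Finset.card_bij (fun (j : Fin n) _ => (j : ℕ))
  · intro a ha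
    simpa using (Finset.mem_filter.mp ha).2
  · intro a _ b _ hab
    exact Fin.val_injective hab
  · intro b hb
    have hb' : b < s := Finset.mem_range.mp hb
    exact ⟨⟨b, lt_of_lt_of_le hb' hs⟩, by simp [hb'], rfl⟩

private lemma myCardLtFin (n : ℕ) (i : Fin n) :
    ((Finset.univ : Finset (Fin n)).filter (fun j => j < i)).card = (i : ℕ) := by
  have h : (Finset.univ : Finset (Fin n)).filter (fun j => j < i)
      = (Finset.univ : Finset (Fin n)).filter (fun j : Fin n => (j : ℕ) < (i : ℕ)) :=
    Finset.filter_congr (fun j _ => Iff.rfl)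
  rw [h, myCardValLt n _ i.isLt.le]

end EfunInterpAux

/-- interpolation property `E_r(ζ^{(s)}) = δ_{rs}`. -/

theorem Efun_interpolation (n : ℕ) (hn : 1 ≤ n) (r s : ℕ) (hr : r ≤ n) (hs : s ≤ n)
    (p t a₁ a₂ : ℂ) (hp : ‖p‖ < 1) (hp0 : p ≠ 0) (ht : t ≠ 0)
    (ha₁ : a₁ ≠ 0) (ha₂ : a₂ ≠ 0) (hgen : eDenomsNZ p t a₁ a₂ n) :
    Efun p t a₁ a₂ r (zetaPt a₁ a₂ t n s) = if r = s then (1 : ℂ) else 0 := by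
  classical
  have hn0 : 0 < n := hn
  set S₀ : Finset (Fin n) := Finset.univ.filter (fun j : Fin n => (j : ℕ) < s) with hS₀def
  have hcardS₀ : S₀.card = s := myCardValLt n s hs
  have vanish : ∀ S : Finset (Fin n), S ≠ S₀ →
      (∏ i ∈ S,
        thetaPm p (a₂ * t ^ ((i : ℕ) - (S.filter (fun j => j < i)).card)) (zetaPt a₁ a₂ t n s i) /
          thetaPm p (a₂ * t ^ ((i : ℕ) - (S.filter (fun j => j < i)).card))
            (a₁ * t ^ (S.filter (fun j => j < i)).card)) *
      (∏ i ∈ Sᶜ,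
        thetaPm p (a₁ * t ^ ((i : ℕ) - (Sᶜ.filter (fun j => j < i)).card)) (zetaPt a₁ a₂ t n s i) /
          thetaPm p (a₁ * t ^ ((i : ℕ) - (Sᶜ.filter (fun j => j < i)).card))
            (a₂ * t ^ (Sᶜ.filter (fun j => j < i)).card)) = 0 := by
    intro S hSne
    by_cases hA : ∃ i ∈ Sᶜ, (i : ℕ) < s ∧ (Sᶜ.filter (fun j => j < i)).card = 0
    · obtain ⟨i, hiSc, his, hrank⟩ := hA
      have hz : zetaPt a₁ a₂ t n s i = a₁ * t ^ (i : ℕ) := by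
        simp only [zetaPt]; rw [if_pos his]
      have hfac : thetaPm p (a₁ * t ^ ((i : ℕ) - (Sᶜ.filter (fun j => j < i)).card))
          (zetaPt a₁ a₂ t n s i) = 0 := by
        rw [hrank, Nat.sub_zero, hz]
        exact myThetaPmSelf p _ (mul_ne_zero ha₁ (pow_ne_zero _ ht))
      rw [Finset.prod_eq_zero hiSc (by rw [hfac, zero_div]), mul_zero]
    · push_neg at hA
      have hsub : ∀ j : Fin n, (j : ℕ) < s → j ∈ S := by
        by_contra hc
        push_neg at hc
        obtain ⟨j, hjs, hjS⟩ := hc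
        have hTne : (Sᶜ.filter (fun j : Fin n => (j : ℕ) < s)).Nonempty :=
          ⟨j, Finset.mem_filter.mpr ⟨Finset.mem_compl.mpr hjS, hjs⟩⟩
        have hiT := Finset.min'_mem _ hTne
        set i := (Sᶜ.filter (fun j : Fin n => (j : ℕ) < s)).min' hTne with hidef
        rw [Finset.mem_filter] at hiT
        apply hA i hiT.1 hiT.2
        rw [Finset.card_eq_zero, Finset.filter_eq_empty_iff]
        intro k hk hki
        have hks : (k : ℕ) < s := lt_trans (Fin.lt_def.mp hki) hiT.2
        exact absurd (Finset.min'_le _ _ (Finset.mem_filter.mpr ⟨hk, hks⟩)) (not_le.mpr hki)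
      have hUne : (S.filter (fun j : Fin n => ¬ (j : ℕ) < s)).Nonempty := by
        by_contra hc
        apply hSne
        rw [Finset.not_nonempty_iff_eq_empty, Finset.filter_eq_empty_iff] at hc
        ext j
        simp only [hS₀def, Finset.mem_filter, Finset.mem_univ, true_and]
        constructor
        · intro hj
          by_contra hjs
          exact hc hj hjs
        · exact hsub j
      have hiU := Finset.min'_mem _ hUne
      set i := (S.filter (fun j : Fin n => ¬ (j : ℕ) < s)).min' hUne with hidef
      rw [Finset.mem_filter] at hiU
      obtain ⟨hiS, his⟩ := hiU
      have his' : s ≤ (i : ℕ) := not_lt.mp his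
      have hfilter : S.filter (fun j => j < i) = S₀ := by
        ext j
        simp only [hS₀def, Finset.mem_filter, Finset.mem_univ, true_and]
        constructor
        · rintro ⟨hjS, hji⟩
          by_contra hjs
          exact absurd (Finset.min'_le _ _ (Finset.mem_filter.mpr ⟨hjS, hjs⟩))
            (not_le.mpr hji)
        · intro hjs
          exact ⟨hsub j hjs, Fin.lt_def.mpr (lt_of_lt_of_le hjs his')⟩
      have hrank : (S.filter (fun j => j < i)).card = s := by rw [hfilter, hcardS₀]
      have hz : zetaPt a₁ a₂ t n s i = a₂ * t ^ ((i : ℕ) - s) := by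
        simp only [zetaPt]; rw [if_neg his]
      have hfac : thetaPm p (a₂ * t ^ ((i : ℕ) - (S.filter (fun j => j < i)).card))
          (zetaPt a₁ a₂ t n s i) = 0 := by
        rw [hrank, hz]
        exact myThetaPmSelf p _ (mul_ne_zero ha₂ (pow_ne_zero _ ht))
      rw [Finset.prod_eq_zero hiS (by rw [hfac, zero_div]), zero_mul]
  unfold Efun
  by_cases hrs : r = s
  · subst hrs
    rw [if_pos rfl]
    rw [Finset.sum_eq_single_of_mem S₀ (Finset.mem_powersetCard_univ.mpr hcardS₀)
      (fun S hS hne => vanish S hne)]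
    have h1 : (∏ i ∈ S₀,
        thetaPm p (a₂ * t ^ ((i : ℕ) - (S₀.filter (fun j => j < i)).card)) (zetaPt a₁ a₂ t n r i) /
          thetaPm p (a₂ * t ^ ((i : ℕ) - (S₀.filter (fun j => j < i)).card))
            (a₁ * t ^ (S₀.filter (fun j => j < i)).card)) = 1 := by
      apply Finset.prod_eq_one
      intro i hi
      have his : (i : ℕ) < r := by
        have := Finset.mem_filter.mp hi
        exact this.2
      have hrank : (S₀.filter (fun j => j < i)).card = (i : ℕ) := by
        have heq : S₀.filter (fun j => j < i)
            = (Finset.univ : Finset (Fin n)).filter (fun j => j < i) := by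
          ext j
          simp only [hS₀def, Finset.mem_filter, Finset.mem_univ, true_and]
          constructor
          · rintro ⟨-, h⟩; exact h
          · intro h; exact ⟨lt_trans (Fin.lt_def.mp h) his, h⟩
        rw [heq, myCardLtFin]
      have hz : zetaPt a₁ a₂ t n r i = a₁ * t ^ (i : ℕ) := by
        simp only [zetaPt]; rw [if_pos his]
      rw [hrank, hz, Nat.sub_self]
      exact div_self (hgen 0 (i : ℕ) hn0 i.isLt).1
    have h2 : (∏ i ∈ S₀ᶜ,
        thetaPm p (a₁ * t ^ ((i : ℕ) - (S₀ᶜ.filter (fun j => j < i)).card)) (zetaPt a₁ a₂ t n r i) /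
          thetaPm p (a₁ * t ^ ((i : ℕ) - (S₀ᶜ.filter (fun j => j < i)).card))
            (a₂ * t ^ (S₀ᶜ.filter (fun j => j < i)).card)) = 1 := by
      apply Finset.prod_eq_one
      intro i hi
      have his : ¬ (i : ℕ) < r := by
        have := Finset.mem_compl.mp hi
        simpa [hS₀def] using this
      have his' : r ≤ (i : ℕ) := not_lt.mp his
      have hrank : (S₀ᶜ.filter (fun j => j < i)).card = (i : ℕ) - r := by
        have hdisj : Disjoint (S₀ᶜ.filter (fun j => j < i)) S₀ := by
          rw [Finset.disjoint_left]
          intro j hj hj2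
          exact absurd hj2 (Finset.mem_compl.mp (Finset.mem_filter.mp hj).1)
        have hunion : S₀ᶜ.filter (fun j => j < i) ∪ S₀
            = (Finset.univ : Finset (Fin n)).filter (fun j => j < i) := by
          ext j
          simp only [hS₀def, Finset.mem_union, Finset.mem_filter, Finset.mem_compl,
            Finset.mem_univ, true_and]
          constructor
          · rintro (⟨-, h⟩ | h)
            · exact h
            · exact Fin.lt_def.mpr (lt_of_lt_of_le h his')
          · intro h
            by_cases hjs : (j : ℕ) < r
            · exact Or.inr hjs
            · exact Or.inl ⟨hjs, h⟩
        have hcu := Finset.card_union_of_disjoint hdisj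
        rw [hunion, myCardLtFin, hcardS₀] at hcu
        omega
      have hz : zetaPt a₁ a₂ t n r i = a₂ * t ^ ((i : ℕ) - r) := by
        simp only [zetaPt]; rw [if_neg his]
      rw [hrank, hz, Nat.sub_sub_self his']
      exact div_self (hgen r ((i : ℕ) - r) (lt_of_le_of_lt his' i.isLt)
        (lt_of_le_of_lt (Nat.sub_le _ _) i.isLt)).2
    rw [h1, h2, mul_one]
  · rw [if_neg hrs]
    apply Finset.sum_eq_zero
    intro S hS
    apply vanish
    intro h
    apply hrs
    rw [← hcardS₀, ← h]
    exact (Finset.mem_powersetCard_univ.mp hS).symm
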